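/- Let (M,d) be a metric space and μ a finite measure on M with μ(M) > 0 that is c-doubling for some c ≥ 1. Suppose the diameter of M equals Δ > 0 and is attained (there exist u, v ∈ M with d(u,v) = Δ, and d(p,q) ≤ Δ for all p,q ∈ M), and let α ≥ 1. Then for every point p ∈ M, μ(B̄(p, Δ·(α+2)/(8(α+1)))) ≤ (1 − 1/c²)·μ(M). -/
import Mathlib


open MeasureTheory Metric
open scoped NNReal ENNReal

theorem stmt_7 {M : Type*} [MetricSpace M] [MeasurableSpace M] [BorelSpace M]
    (μ : Measure M) [IsFiniteMeasure μ] (hpos : 0 < μ Set.univ)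
    (c : ℝ≥0) (hc : 1 ≤ c)
    (hdbl : ∀ (x : M) (r : ℝ), 0 < r →
      μ (closedBall x (2 * r)) ≤ c * μ (closedBall x r))
    (Δ : ℝ) (hΔ : 0 < Δ) (u v : M) (huv : dist u v = Δ)
    (hdiam : ∀ p q : M, dist p q ≤ Δ) (α : ℝ) (hα : 1 ≤ α)
    (p : M) :
    μ (closedBall p (Δ * (α + 2) / (8 * (α + 1)))) ≤
      (1 - ((c : ℝ≥0∞))⁻¹ ^ 2) * μ Set.univ := by
  -- pick w ∈ {u,v} with dist p w ≥ Δ/2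
  obtain ⟨w, hw⟩ : ∃ w : M, Δ / 2 ≤ dist p w := by
    by_cases h : Δ / 2 ≤ dist p u
    · exact ⟨u, h⟩
    · refine ⟨v, ?_⟩
      push_neg at h
      have := dist_triangle u p v
      rw [huv] at this
      rw [dist_comm] at h
      linarith
  set r : ℝ := Δ * (α + 2) / (8 * (α + 1)) with hr
  have hα1 : (0:ℝ) < α + 1 := by linarith
  have hrle : r ≤ 3 * Δ / 16 := by
    rw [hr, div_le_div_iff₀ (by positivity) (by norm_num)]
    nlinarith
  -- doubling twice: μ univ ≤ c^2 * μ (closedBall w (Δ/4))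
  have huniv : Set.univ ⊆ closedBall w Δ := fun x _ => by
    simp [mem_closedBall, hdiam x w]
  have hd1 : μ (closedBall w (2 * (Δ/2))) ≤ c * μ (closedBall w (Δ/2)) :=
    hdbl w (Δ/2) (by linarith)
  have hd2 : μ (closedBall w (2 * (Δ/4))) ≤ c * μ (closedBall w (Δ/4)) :=
    hdbl w (Δ/4) (by linarith)
  have hM : μ Set.univ ≤ (c:ℝ≥0∞)^2 * μ (closedBall w (Δ/4)) := by
    calc μ Set.univ ≤ μ (closedBall w Δ) := measure_mono huniv
      _ = μ (closedBall w (2 * (Δ/2))) := by ring_nf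
      _ ≤ c * μ (closedBall w (Δ/2)) := hd1
      _ = c * μ (closedBall w (2 * (Δ/4))) := by ring_nf
      _ ≤ c * (c * μ (closedBall w (Δ/4))) :=
        mul_le_mul_right hd2 _
      _ = (c:ℝ≥0∞)^2 * μ (closedBall w (Δ/4)) := by ring
  have hcne : (c:ℝ≥0∞) ≠ 0 := by
    simp only [ne_eq, ENNReal.coe_eq_zero]
    exact fun h => by simp [h] at hc
  have hcnt : (c:ℝ≥0∞) ≠ ⊤ := ENNReal.coe_ne_top
  have hMle : ((c:ℝ≥0∞))⁻¹ ^ 2 * μ Set.univ ≤ μ (closedBall w (Δ/4)) := by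
    calc ((c:ℝ≥0∞))⁻¹ ^ 2 * μ Set.univ
        ≤ ((c:ℝ≥0∞))⁻¹ ^ 2 * ((c:ℝ≥0∞)^2 * μ (closedBall w (Δ/4))) :=
          mul_le_mul_right hM _
      _ = (((c:ℝ≥0∞))⁻¹ * c)^2 * μ (closedBall w (Δ/4)) := by ring
      _ = μ (closedBall w (Δ/4)) := by
          rw [ENNReal.inv_mul_cancel hcne hcnt]; simp
  -- disjointness
  have hdisj : Disjoint (closedBall p r) (closedBall w (Δ/4)) := by
    rw [Set.disjoint_left]
    intro x hx hx'
    simp only [mem_closedBall] at hx hx'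
    have h := dist_triangle p x w
    have e1 := dist_comm x p
    have e2 := dist_comm x w
    linarith
  have hsum : μ (closedBall p r) + μ (closedBall w (Δ/4)) ≤ μ Set.univ := by
    rw [← measure_union hdisj measurableSet_closedBall]
    exact measure_mono (Set.subset_univ _)
  have h1 : μ (closedBall p r) ≤ μ Set.univ - μ (closedBall w (Δ/4)) :=
    ENNReal.le_sub_of_add_le_right (measure_ne_top μ _) hsum
  have h2 : μ Set.univ - μ (closedBall w (Δ/4)) ≤
      μ Set.univ - ((c:ℝ≥0∞))⁻¹ ^ 2 * μ Set.univ := tsub_le_tsub_left hMle _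
  have h3 : (1 - ((c : ℝ≥0∞))⁻¹ ^ 2) * μ Set.univ
      = μ Set.univ - ((c:ℝ≥0∞))⁻¹ ^ 2 * μ Set.univ := by
    rw [ENNReal.sub_mul (fun _ _ => measure_ne_top μ _), one_mul]
  rw [h3]
  exact h1.trans h2
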